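/- For any schedule produced by greedy list scheduling, the completion time satisfies W ≤ (1/p)·Σ_{i=1}^n w_i + max_i w_i. -/

import Mathlib

open Finset

/-- Final load of processor `j` under assignment `assign`. -/
def loadOf {n p : ℕ} (w : Fin n → ℝ) (assign : Fin n → Fin p) (j : Fin p) : ℝ :=
  ∑ i ∈ Finset.univ.filter (fun i => assign i = j), w i

/-- Makespan of an assignment: the maximum processor load. -/
def makespan {n p : ℕ} (hp : 0 < p) (w : Fin n → ℝ) (assign : Fin n → Fin p) : ℝ :=
  Finset.univ.sup' ⟨⟨0, hp⟩, Finset.mem_univ _⟩ (loadOf w assign)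

/-- Load of processor `j` coming from the tasks preceding task `i` in the list order. -/
def loadBefore {n p : ℕ} (w : Fin n → ℝ) (assign : Fin n → Fin p) (i : Fin n) (j : Fin p) : ℝ :=
  ∑ k ∈ Finset.univ.filter (fun k => k < i ∧ assign k = j), w k

/-- for a greedy list schedule, the makespan satisfies
`W ≤ (1/p)·Σ w_i + max_i w_i`. -/
theorem greedy_makespan_bound {n p : ℕ} (hn : 0 < n) (hp : 0 < p)
    (w : Fin n → ℝ) (hw : ∀ i, 0 ≤ w i)
    (assign : Fin n → Fin p)
    (hgreedy : ∀ i j, loadBefore w assign i (assign i) ≤ loadBefore w assign i j) :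
    makespan hp w assign
      ≤ (∑ i, w i) / p + Finset.univ.sup' ⟨⟨0, hn⟩, Finset.mem_univ _⟩ w := by
  have hsum_nonneg : (0:ℝ) ≤ ∑ i, w i := Finset.sum_nonneg fun i _ => hw i
  have hmax_nonneg : (0:ℝ) ≤ Finset.univ.sup' ⟨⟨0, hn⟩, Finset.mem_univ _⟩ w := by
    refine le_trans (hw ⟨0, hn⟩) (Finset.le_sup' _ (Finset.mem_univ _))
  refine Finset.sup'_le _ _ ?_
  intro j _
  set S := Finset.univ.filter (fun i => assign i = j) with hS
  rcases S.eq_empty_or_nonempty with hSe | hSne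
  · have : loadOf w assign j = 0 := by
      rw [loadOf, ← hS, hSe, Finset.sum_empty]
    rw [this]
    positivity
  · obtain ⟨i, hiS, hmax⟩ := S.exists_max_image id hSne
    have hij : assign i = j := (Finset.mem_filter.mp hiS).2
    have hsplit : loadOf w assign j = loadBefore w assign i j + w i := by
      rw [loadOf, loadBefore, ← hS]
      have : Finset.univ.filter (fun k => k < i ∧ assign k = j) = S.erase i := by
        ext k
        simp only [Finset.mem_filter, Finset.mem_erase, Finset.mem_univ, true_and]
        constructor
        · rintro ⟨hk, ha⟩; exact ⟨ne_of_lt hk, Finset.mem_filter.mpr ⟨Finset.mem_univ _, ha⟩⟩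
        · rintro ⟨hne, hk⟩
          exact ⟨lt_of_le_of_ne (hmax k hk) hne, (Finset.mem_filter.mp hk).2⟩
      rw [this, add_comm, Finset.add_sum_erase _ _ hiS]
    have hfib : ∑ j' : Fin p, loadBefore w assign i j' = ∑ k ∈ Finset.univ.filter (fun k => k < i), w k := by
      rw [← Finset.sum_fiberwise (Finset.univ.filter (fun k => k < i)) assign w]
      apply Finset.sum_congr rfl
      intro j' _
      rw [loadBefore, Finset.filter_filter]
    have hbound : (p : ℝ) * loadBefore w assign i j ≤ ∑ k, w k := by
      calc (p : ℝ) * loadBefore w assign i j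
          = ∑ _j' : Fin p, loadBefore w assign i j := by
            rw [Finset.sum_const, Finset.card_univ, Fintype.card_fin, nsmul_eq_mul]
        _ ≤ ∑ j' : Fin p, loadBefore w assign i j' := by
            apply Finset.sum_le_sum
            intro j' _
            rw [← hij]
            exact hgreedy i j'
        _ = ∑ k ∈ Finset.univ.filter (fun k => k < i), w k := hfib
        _ ≤ ∑ k, w k := Finset.sum_le_sum_of_subset_of_nonneg (Finset.filter_subset _ _)
            (fun k _ _ => hw k)
    have h1 : loadBefore w assign i j ≤ (∑ k, w k) / p := by
      rw [le_div_iff₀ (by exact_mod_cast hp)]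
      linarith [hbound]
    have h2 : w i ≤ Finset.univ.sup' ⟨⟨0, hn⟩, Finset.mem_univ _⟩ w :=
      Finset.le_sup' _ (Finset.mem_univ _)
    rw [hsplit]
    exact add_le_add h1 h2
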